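/- Let (R, 𝔪, K) be an F-finite F-pure Noetherian local ring of prime characteristic p, f ∈ R, and J ⊆ R an ideal. Then f ∈ J_e if and only if f ∈ (J R̂)_e, where R̂ is the 𝔪-adic completion; i.e., Cartier contraction is compatible with completion. -/

import Mathlib

open Filter

section Defs
variable (p : ℕ) {R : Type*} [CommRing R]

/-- A `p^{-e}`-linear (Cartier) operator on `R`: under the identification of `R^{1/p^e}`
with `R` (sending `f^{1/p^e}` to `f`), these are exactly the `R`-linear maps
`R^{1/p^e} → R`. -/
def IsCartier (e : ℕ) (φ : R →+ R) : Prop :=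
  ∀ a x : R, φ (a ^ p ^ e * x) = a * φ x

/-- `R` is `F`-pure: the inclusion `R ⊆ R^{1/p^e}` splits as a map of `R`-modules,
equivalently there is a Cartier operator sending `1` to `1`. -/
def FPure (R : Type*) [CommRing R] : Prop :=
  ∀ e : ℕ, ∃ φ : R →+ R, IsCartier p e φ ∧ φ 1 = 1

/-- `R` is `F`-finite: `R^{1/p^e}` is a finitely generated `R`-module, i.e. `R` is a
finitely generated module over its subring of `p^e`-th powers. -/
def FFinite (R : Type*) [CommRing R] : Prop :=
  ∀ e : ℕ, ∃ s : Finset R, ∀ x : R, ∃ c : R → R, x = ∑ y ∈ s, c y ^ p ^ e * y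

/-- The Frobenius power `J^{[q]}`, generated by the `q`-th powers of elements of `J`. -/
def frobeniusPower (J : Ideal R) (q : ℕ) : Ideal R :=
  Ideal.span ((fun f => f ^ q) '' (J : Set R))

/-- The Cartier contraction `J_e = { f | φ(f^{1/p^e}) ∈ J for all φ ∈ Hom_R(R^{1/p^e}, R) }`. -/
def cartierContraction (e : ℕ) (J : Ideal R) : Ideal R where
  carrier := { f | ∀ φ : R →+ R, IsCartier p e φ → φ f ∈ J }
  add_mem' := fun ha hb φ hφ => by
    rw [map_add]; exact J.add_mem (ha φ hφ) (hb φ hφ)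
  zero_mem' := fun φ hφ => by rw [map_zero]; exact J.zero_mem
  smul_mem' := by
    intro c f hf φ hφ
    have h : IsCartier p e (φ.comp (AddMonoidHom.mulLeft c)) := by
      intro a x
      simp only [AddMonoidHom.coe_comp, Function.comp_apply, AddMonoidHom.coe_mulLeft]
      rw [mul_left_comm]
      exact hφ a (c * x)
    simpa using hf _ h

/-- The Cartier core `𝒫(J) = ⋂ₛ Jₛ`. -/
def cartierCore (J : Ideal R) : Ideal R := ⨅ s : ℕ, cartierContraction p s J

/-- `J` is uniformly `F`-compatible: `φ(J^{1/p^e}) ⊆ J` for all `e > 0` and all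
`φ ∈ Hom_R(R^{1/p^e}, R)`. -/
def UniformlyFCompatible (J : Ideal R) : Prop :=
  ∀ e : ℕ, 0 < e → ∀ φ : R →+ R, IsCartier p e φ → ∀ f ∈ J, φ f ∈ J

/-- `ν_𝔞^J(q) = max { m | 𝔞^m ⊄ J^{[q]} }`. -/
noncomputable def nuNum (𝔞 J : Ideal R) (q : ℕ) : ℕ :=
  sSup { m : ℕ | ¬ 𝔞 ^ m ≤ frobeniusPower J q }

/-- `b_𝔞^J(p^e) = max { t | 𝔞^t ⊄ J_e }`. -/
noncomputable def bNum (𝔞 J : Ideal R) (e : ℕ) : ℕ :=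
  sSup { t : ℕ | ¬ 𝔞 ^ t ≤ cartierContraction p e J }

/-- `μ(𝔞)`, the minimal number of generators of `𝔞`. -/
noncomputable def muGen (𝔞 : Ideal R) : ℕ :=
  sInf { k : ℕ | ∃ s : Finset R, s.card = k ∧ Ideal.span (s : Set R) = 𝔞 }

end Defs

section Aux

variable {R : Type*} [CommRing R]

theorem mem_cartierContraction_iff {p e : ℕ} {J : Ideal R} {f : R} :
    f ∈ cartierContraction p e J ↔ ∀ φ : R →+ R, IsCartier p e φ → φ f ∈ J :=
  Iff.rfl

theorem span_pow_le_span_pow (s : Finset R) (k : ℕ) :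
    Ideal.span (s : Set R) ^ (s.card * k + 1) ≤ Ideal.span ((fun a => a ^ k) '' (s : Set R)) := by
  classical
  induction s using Finset.induction_on with
  | empty => simp
  | @insert x t hx ih =>
      have hcard : (insert x t).card = t.card + 1 := Finset.card_insert_of_notMem hx
      have h1 : Ideal.span ((insert x t : Finset R) : Set R) =
          Ideal.span {x} ⊔ Ideal.span (t : Set R) := by
        rw [Finset.coe_insert, Ideal.span_insert]
      have hexp : (insert x t).card * k + 1 = k + (t.card * k + 1) := by rw [hcard]; ring
      rw [h1, hexp]
      refine le_trans Ideal.sup_pow_add_le_pow_sup_pow (sup_le ?_ ?_)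
      · rw [Ideal.span_singleton_pow]
        refine Ideal.span_le.mpr ?_
        rw [Set.singleton_subset_iff]
        exact Ideal.subset_span ⟨x, by simp, rfl⟩
      · refine le_trans ih (Ideal.span_mono (Set.image_mono ?_))
        intro a ha
        simp only [Finset.coe_insert, Set.mem_insert_iff]
        exact Or.inr ha

theorem cartier_map_mem {p e : ℕ} {φ : R →+ R} (hφ : IsCartier p e φ) {K : Ideal R} {x : R}
    (hx : x ∈ Ideal.span ((fun a => a ^ p ^ e) '' (K : Set R))) : φ x ∈ K := by
  obtain ⟨c, hsupp, rfl⟩ := Submodule.mem_span_set.mp hx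
  rw [Finsupp.sum, map_sum]
  refine Submodule.sum_mem _ fun g hg => ?_
  obtain ⟨a, haK, rfl⟩ := hsupp hg
  rw [smul_eq_mul, mul_comm, hφ]
  exact K.mul_mem_right _ haK

theorem exists_pow_le_frob [IsNoetherianRing R] (I : Ideal R) (k n : ℕ) :
    ∃ N, n ≤ N ∧ I ^ N ≤ Ideal.span ((fun a => a ^ k) '' ((I ^ n : Ideal R) : Set R)) := by
  obtain ⟨s, hs⟩ := IsNoetherian.noetherian (I ^ n)
  refine ⟨n * (s.card * k + 1), Nat.le_mul_of_pos_right n (Nat.succ_pos _), ?_⟩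
  have h1 : I ^ n = Ideal.span (s : Set R) := hs.symm
  rw [pow_mul, h1]
  refine le_trans (span_pow_le_span_pow s k) (Ideal.span_mono (Set.image_mono ?_))
  exact Ideal.subset_span

theorem cartier_cont [IsNoetherianRing R] (I : Ideal R) {p e : ℕ} {φ : R →+ R}
    (hφ : IsCartier p e φ) (n : ℕ) :
    ∃ N, n ≤ N ∧ ∀ x ∈ I ^ N, φ x ∈ I ^ n := by
  obtain ⟨N, hn, hle⟩ := exists_pow_le_frob I (p ^ e) n
  exact ⟨N, hn, fun x hx => cartier_map_mem hφ (hle hx)⟩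

/-- An additive map mapping `P` into `Q` descends to quotients. -/
def qlift (φ : R →+ R) {P Q : Submodule R R} (h : ∀ x ∈ P, φ x ∈ Q) :
    (R ⧸ P) →+ R ⧸ Q where
  toFun x := Quotient.liftOn' x (fun r => Submodule.Quotient.mk (φ r)) (fun r s hrs => by
    have hrs' : P.quotientRel r s := hrs
    have hmem : r - s ∈ P := (Submodule.quotientRel_def P).mp hrs'
    exact (Submodule.Quotient.eq Q).mpr (by rw [← map_sub]; exact h _ hmem))
  map_zero' := by
    show Submodule.Quotient.mk (φ 0) = 0
    rw [map_zero]
    rfl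
  map_add' x y := by
    refine Quotient.inductionOn₂' x y fun r t => ?_
    show Submodule.Quotient.mk (φ (r + t)) =
      Submodule.Quotient.mk (φ r) + Submodule.Quotient.mk (φ t)
    rw [map_add, Submodule.Quotient.mk_add]

theorem qlift_mk (φ : R →+ R) {P Q : Submodule R R} (h : ∀ x ∈ P, φ x ∈ Q) (r : R) :
    qlift φ h (Submodule.Quotient.mk r) = Submodule.Quotient.mk (φ r) :=
  rfl

theorem mkq_mul {P : Ideal R} (a b : R) :
    (Submodule.Quotient.mk (a * b) : R ⧸ P) =
      Submodule.Quotient.mk a * Submodule.Quotient.mk b := by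
  rw [Ideal.Quotient.mk_eq_mk, Ideal.Quotient.mk_eq_mk, Ideal.Quotient.mk_eq_mk, map_mul]

theorem mkq_pow {P : Ideal R} (a : R) (k : ℕ) :
    (Submodule.Quotient.mk (a ^ k) : R ⧸ P) = Submodule.Quotient.mk a ^ k := by
  rw [Ideal.Quotient.mk_eq_mk, Ideal.Quotient.mk_eq_mk, map_pow]

theorem AdicCompletion.val_pow' {I : Ideal R} (k : ℕ) (a : AdicCompletion I R) (n : ℕ) :
    (a ^ k).val n = a.val n ^ k := by
  induction k with
  | zero => simp [AdicCompletion.val_one, pow_zero]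
  | succ k ih => rw [pow_succ, AdicCompletion.val_mul, ih, pow_succ]

theorem AdicCompletion.transitionMap_mk' {I : Ideal R} {m n : ℕ} (hmn : m ≤ n) (r : R) :
    AdicCompletion.transitionMap I R hmn (Submodule.Quotient.mk r) = Submodule.Quotient.mk r :=
  rfl

variable {I : Ideal R}

/-- Extension of a Cartier operator to the adic completion. -/
def cartierExtendAux (φ : R →+ R) (N : ℕ → ℕ) (hmono : Monotone N)
    (hN : ∀ n, ∀ x ∈ (I ^ (N n) • ⊤ : Submodule R R), φ x ∈ (I ^ n • ⊤ : Submodule R R)) :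
    AdicCompletion I R →+ AdicCompletion I R where
  toFun x := ⟨fun n => qlift φ (hN n) (x.val (N n)), by
      intro m n hmn
      obtain ⟨r, hr⟩ := Submodule.Quotient.mk_surjective _ (x.val (N n))
      have h1 : x.val (N m) = Submodule.Quotient.mk r := by
        rw [← x.property (hmono hmn), ← hr, AdicCompletion.transitionMap_mk']
      show AdicCompletion.transitionMap I R hmn (qlift φ (hN n) (x.val (N n))) =
        qlift φ (hN m) (x.val (N m))
      rw [← hr, h1, qlift_mk, qlift_mk, AdicCompletion.transitionMap_mk']⟩
  map_zero' := Subtype.ext (funext fun n => by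
    show qlift φ (hN n) ((0 : AdicCompletion I R).val (N n)) = (0 : AdicCompletion I R).val n
    exact map_zero _)
  map_add' x y := Subtype.ext (funext fun n => by
    exact map_add (qlift φ (hN n)) (x.val (N n)) (y.val (N n)))

theorem cartierExtendAux_val (φ : R →+ R) (N : ℕ → ℕ) (hmono : Monotone N)
    (hN : ∀ n, ∀ x ∈ (I ^ (N n) • ⊤ : Submodule R R), φ x ∈ (I ^ n • ⊤ : Submodule R R))
    (x : AdicCompletion I R) (n : ℕ) :
    (cartierExtendAux φ N hmono hN x).val n = qlift φ (hN n) (x.val (N n)) :=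
  rfl

theorem algebraMap_adicCompletion_val (r : R) (n : ℕ) :
    (algebraMap R (AdicCompletion I R) r).val n = Submodule.Quotient.mk r :=
  rfl

theorem cartierExtendAux_of (φ : R →+ R) (N : ℕ → ℕ) (hmono : Monotone N)
    (hN : ∀ n, ∀ x ∈ (I ^ (N n) • ⊤ : Submodule R R), φ x ∈ (I ^ n • ⊤ : Submodule R R))
    (r : R) :
    cartierExtendAux φ N hmono hN (algebraMap R (AdicCompletion I R) r) =
      algebraMap R (AdicCompletion I R) (φ r) := by
  refine AdicCompletion.ext fun n => ?_
  rw [cartierExtendAux_val, algebraMap_adicCompletion_val, algebraMap_adicCompletion_val, qlift_mk]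

theorem cartierExtendAux_isCartier {p e : ℕ} {φ : R →+ R} (hφ : IsCartier p e φ)
    (N : ℕ → ℕ) (hmono : Monotone N) (hge : ∀ n, n ≤ N n)
    (hN : ∀ n, ∀ x ∈ (I ^ (N n) • ⊤ : Submodule R R), φ x ∈ (I ^ n • ⊤ : Submodule R R)) :
    IsCartier p e (cartierExtendAux φ N hmono hN) := by
  intro a x
  refine AdicCompletion.ext fun n => ?_
  obtain ⟨α, hα⟩ := Submodule.Quotient.mk_surjective _ (a.val (N n))
  obtain ⟨ξ, hξ⟩ := Submodule.Quotient.mk_surjective _ (x.val (N n))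
  have hval : (a ^ p ^ e * x).val (N n) = Submodule.Quotient.mk (α ^ p ^ e * ξ) := by
    rw [AdicCompletion.val_mul, AdicCompletion.val_pow', ← hα, ← hξ, mkq_mul, mkq_pow]
  have haval : a.val n = Submodule.Quotient.mk α := by
    rw [← a.property (hge n), ← hα, AdicCompletion.transitionMap_mk']
  rw [AdicCompletion.val_mul, cartierExtendAux_val, cartierExtendAux_val, hval, ← hξ,
    qlift_mk, qlift_mk, hφ, haval, mkq_mul]

theorem mem_of_algebraMap_mem_map [IsNoetherianRing R] [IsLocalRing R] {J : Ideal R} {g : R}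
    (h : algebraMap R (AdicCompletion (IsLocalRing.maximalIdeal R) R) g ∈
      J.map (algebraMap R (AdicCompletion (IsLocalRing.maximalIdeal R) R))) : g ∈ J := by
  set I := IsLocalRing.maximalIdeal R with hI
  have hsup : ∀ n : ℕ, g ∈ J ⊔ I ^ n := by
    intro n
    have h2 : (AdicCompletion.evalₐ I n) (algebraMap R _ g) ∈
        Ideal.map (((AdicCompletion.evalₐ I n : AdicCompletion I R →ₐ[R] R ⧸ I ^ n) :
          AdicCompletion I R →+* R ⧸ I ^ n).comp (algebraMap R (AdicCompletion I R))) J := by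
      rw [← Ideal.map_map]
      exact Ideal.mem_map_of_mem _ h
    have h3 : (((AdicCompletion.evalₐ I n : AdicCompletion I R →ₐ[R] R ⧸ I ^ n) :
          AdicCompletion I R →+* R ⧸ I ^ n).comp (algebraMap R (AdicCompletion I R))) =
        Ideal.Quotient.mk (I ^ n) := by
      ext r
      simp [AlgHom.commutes]
    have h4 : (AdicCompletion.evalₐ I n) (algebraMap R _ g) = Ideal.Quotient.mk (I ^ n) g := by
      rw [AlgHom.commutes]
      rfl
    rw [h3, h4] at h2
    exact Ideal.mem_quotient_iff_mem_sup.mp h2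
  haveI : Module.Finite R (R ⧸ J) :=
    Module.Finite.of_surjective (Submodule.mkQ J) (Submodule.mkQ_surjective J)
  have hbot : (⨅ i : ℕ, I ^ i • ⊤ : Submodule R (R ⧸ J)) = ⊥ :=
    Ideal.iInf_pow_smul_eq_bot_of_isLocalRing (I := I) (M := R ⧸ J)
      (Ideal.IsMaximal.ne_top (IsLocalRing.maximalIdeal.isMaximal R))
  have hg : (Submodule.Quotient.mk g : R ⧸ J) ∈ (⨅ i : ℕ, I ^ i • ⊤ : Submodule R (R ⧸ J)) := by
    rw [Submodule.mem_iInf]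
    intro n
    obtain ⟨j, hj, y, hy, hjy⟩ := Submodule.mem_sup.mp (hsup n)
    have h5 : (Submodule.Quotient.mk g : R ⧸ J) = Submodule.Quotient.mk y := by
      rw [Submodule.Quotient.eq]
      have : g - y = j := by rw [← hjy]; ring
      rw [this]; exact hj
    have h6 : (Submodule.Quotient.mk y : R ⧸ J) = y • (Submodule.Quotient.mk 1 : R ⧸ J) := by
      rw [← Submodule.Quotient.mk_smul J y (1 : R), smul_eq_mul, mul_one]
    rw [h5, h6]
    exact Submodule.smul_mem_smul hy Submodule.mem_top
  rw [hbot] at hg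
  rw [Submodule.mem_bot] at hg
  exact (Submodule.Quotient.mk_eq_zero J).mp hg

end Aux

/-- For an `F`-finite `F`-pure Noetherian local ring `(R, 𝔪)` of prime
characteristic `p`, `f ∈ J_e` iff `f ∈ (J R̂)_e`, where `R̂` is the `𝔪`-adic completion:
Cartier contraction is compatible with completion. -/
theorem mem_cartierContraction_iff_mem_completion {R : Type*} [CommRing R]
    [IsLocalRing R] [IsNoetherianRing R]
    (p : ℕ) (hp : p.Prime) [CharP R p] (hFF : FFinite p R) (hFP : FPure p R)
    (J : Ideal R) (e : ℕ) (f : R) :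
    f ∈ cartierContraction p e J ↔
      algebraMap R (AdicCompletion (IsLocalRing.maximalIdeal R) R) f ∈
        cartierContraction p e
          (Ideal.map (algebraMap R (AdicCompletion (IsLocalRing.maximalIdeal R) R)) J) := by
  classical
  haveI := Fact.mk hp
  set I := IsLocalRing.maximalIdeal R with hIdef
  set ι := algebraMap R (AdicCompletion I R) with hιdef
  constructor
  · -- forward direction
    intro hf ψ hψ
    obtain ⟨s, hs⟩ := hFF e
    choose rep hrep using hs
    have hq0 : p ^ e ≠ 0 := pow_ne_zero e hp.ne_zero
    set σ : ((↑s : Type _) → R) → R := fun c => ∑ y : ↑s, c y ^ p ^ e * (y : R) with hσdef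
    have hσ_add : ∀ a b, σ (a + b) = σ a + σ b := by
      intro a b
      simp only [hσdef, Pi.add_apply, add_pow_char_pow, add_mul, Finset.sum_add_distrib]
    have hσ_sub : ∀ a b, σ (a - b) = σ a - σ b := by
      intro a b
      simp only [hσdef, Pi.sub_apply, sub_pow_char_pow, sub_mul, Finset.sum_sub_distrib]
    have hσ_smul : ∀ (r : R) a, σ (r • a) = r ^ p ^ e * σ a := by
      intro r a
      simp only [hσdef, Pi.smul_apply, smul_eq_mul, mul_pow, Finset.mul_sum, mul_assoc]
    have hσ_zero : σ 0 = 0 := by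
      simp [hσdef, zero_pow hq0]
    set K : Submodule R ((↑s : Type _) → R) :=
      { carrier := {c | σ c = 0}
        add_mem' := fun {a b} ha hb => by
          show σ (a + b) = 0
          rw [hσ_add, ha, hb, add_zero]
        zero_mem' := hσ_zero
        smul_mem' := fun r {a} ha => by
          show σ (r • a) = 0
          rw [hσ_smul, ha, mul_zero] } with hKdef
    set repc : R → ((↑s : Type _) → R) := fun x y => rep x y with hrepcdef
    have hσrep : ∀ x, σ (repc x) = x := by
      intro x
      have h1 : σ (repc x) = ∑ y ∈ s, rep x y ^ p ^ e * y :=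
        Finset.sum_coe_sort s fun y => rep x y ^ p ^ e * y
      rw [h1]
      exact (hrep x).symm
    haveI : Module.Finite R ↥K := Module.Finite.iff_fg.mpr (IsNoetherian.noetherian K)
    haveI : Module.Flat R (AdicCompletion I R) :=
      inferInstance
    set xmap : ((↑s : Type _) → R) →ₗ[R] AdicCompletion I R :=
      { toFun := fun w => ∑ y : ↑s, ι (w y) * ψ (ι (y : R))
        map_add' := by
          intro a b
          simp only [Pi.add_apply, map_add, add_mul, Finset.sum_add_distrib]
        map_smul' := by
          intro r a
          simp only [Pi.smul_apply, smul_eq_mul, map_mul, mul_assoc, RingHom.id_apply,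
            Algebra.smul_def, Finset.mul_sum]
          rfl } with hxmapdef
    have hcomp : xmap ∘ₗ K.subtype = 0 := by
      apply LinearMap.ext
      rintro ⟨c, hc⟩
      have hc' : σ c = 0 := hc
      show ∑ y : ↑s, ι (c y) * ψ (ι (y : R)) = 0
      have hterm : ∀ y : ↑s, ι (c y) * ψ (ι (y : R)) = ψ (ι (c y ^ p ^ e * (y : R))) := by
        intro y
        rw [map_mul, map_pow]
        exact (hψ (ι (c y)) (ι (y : R))).symm
      rw [Finset.sum_congr rfl fun y _ => hterm y]
      rw [← map_sum, ← map_sum]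
      have : (∑ y : ↑s, c y ^ p ^ e * (y : R)) = σ c := rfl
      rw [this, hc', map_zero, map_zero]
    obtain ⟨κ, amap, yy, hxy, haf⟩ :=
      Module.Flat.exists_factorization_of_comp_eq_zero_of_free hcomp
    have hamem : ∀ c, c ∈ K → amap c = 0 := by
      intro c hc
      have h0 := LinearMap.congr_fun haf ⟨c, hc⟩
      simpa using h0
    have hrepdiff : ∀ (u : (↑s : Type _) → R) (x : R), σ u = x → amap u = amap (repc x) := by
      intro u x hu
      have hmem : u - repc x ∈ K := by
        show σ (u - repc x) = 0
        rw [hσ_sub, hu, hσrep, sub_self]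
      have h0 := hamem _ hmem
      rw [map_sub] at h0
      exact sub_eq_zero.mp h0
    set φk : Fin κ → (R →+ R) := fun k =>
      { toFun := fun x => amap (repc x) k
        map_zero' := by
          show amap (repc 0) k = 0
          have h0 : repc 0 ∈ K := by
            show σ (repc 0) = 0
            rw [hσrep]
          rw [hamem _ h0, Finsupp.coe_zero, Pi.zero_apply]
        map_add' := by
          intro x x'
          show amap (repc (x + x')) k = amap (repc x) k + amap (repc x') k
          have h1 : amap (repc (x + x')) = amap (repc x + repc x') := by
            refine (hrepdiff (repc x + repc x') (x + x') ?_).symm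
            rw [hσ_add, hσrep, hσrep]
          rw [h1, map_add, Finsupp.add_apply] } with hφkdef
    have hφk : ∀ k, IsCartier p e (φk k) := by
      intro k a x
      show amap (repc (a ^ p ^ e * x)) k = a * amap (repc x) k
      have h1 : amap (repc (a ^ p ^ e * x)) = amap (a • repc x) := by
        refine (hrepdiff (a • repc x) (a ^ p ^ e * x) ?_).symm
        rw [hσ_smul, hσrep]
      rw [h1, map_smul, Finsupp.smul_apply, smul_eq_mul]
    have hJmem : ∀ k, amap (repc f) k ∈ J := fun k =>
      mem_cartierContraction_iff.mp hf (φk k) (hφk k)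
    have hev : ψ (ι f) = yy (amap (repc f)) := by
      have h1 : ψ (ι f) = xmap (repc f) := by
        conv_lhs => rw [← hσrep f]
        show ψ (ι (∑ y : ↑s, repc f y ^ p ^ e * (y : R))) =
          ∑ y : ↑s, ι (repc f y) * ψ (ι (y : R))
        rw [map_sum, map_sum]
        refine Finset.sum_congr rfl fun y _ => ?_
        rw [map_mul, map_pow]
        exact hψ (ι (repc f y)) (ι (y : R))
      rw [h1]
      have h2 := LinearMap.congr_fun hxy (repc f)
      simpa using h2
    rw [hev]
    have hsum : yy (amap (repc f)) =
        (amap (repc f)).sum fun k v => v • yy (Finsupp.single k 1) := by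
      conv_lhs => rw [← Finsupp.sum_single (amap (repc f)), map_finsuppSum]
      refine Finsupp.sum_congr fun k hk => ?_
      have hsingle : Finsupp.single k ((amap (repc f)) k) =
          ((amap (repc f)) k) • Finsupp.single k (1 : R) := by
        rw [Finsupp.smul_single', mul_one]
      rw [hsingle, map_smul]
    rw [hsum]
    refine Submodule.sum_mem _ fun k hk => ?_
    show (amap (repc f)) k • yy (Finsupp.single k 1) ∈ Ideal.map ι J
    rw [Algebra.smul_def]
    exact Ideal.mul_mem_right _ _ (Ideal.mem_map_of_mem ι (hJmem k))
  · -- backward direction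
    intro hf φ hφ
    have hcont : ∀ n : ℕ, ∃ N, n ≤ N ∧ ∀ x ∈ I ^ N, φ x ∈ I ^ n := cartier_cont I hφ
    choose N0 hN0ge hN0 using hcont
    set N : ℕ → ℕ := fun n => n + (Finset.range (n + 1)).sup N0 with hNdef
    have hmono : Monotone N := by
      intro a b hab
      exact add_le_add hab (Finset.sup_mono (Finset.range_subset_range.mpr (by omega)))
    have hge : ∀ n, n ≤ N n := fun n => Nat.le_add_right _ _
    have hNbig : ∀ n, N0 n ≤ N n := fun n =>
      le_trans (Finset.le_sup (Finset.self_mem_range_succ n)) (Nat.le_add_left _ _)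
    have hsmul_top : ∀ k : ℕ, ((I : Ideal R) ^ k • ⊤ : Ideal R) = I ^ k := by
      intro k; ext x; simp
    have hN : ∀ n, ∀ x ∈ (I ^ (N n) • ⊤ : Submodule R R), φ x ∈ (I ^ n • ⊤ : Submodule R R) := by
      intro n x hx
      rw [hsmul_top (N n)] at hx
      rw [hsmul_top n]
      exact hN0 n x (Ideal.pow_le_pow_right (hNbig n) hx)
    have hψ : IsCartier p e (cartierExtendAux φ N hmono hN) :=
      cartierExtendAux_isCartier hφ N hmono hge hN
    have hmem := mem_cartierContraction_iff.mp hf (cartierExtendAux φ N hmono hN) hψ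
    rw [cartierExtendAux_of] at hmem
    exact mem_of_algebraMap_mem_map hmem
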